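/- arXiv:1910.10213 — 3 statements merged into one kernel-verified Lean document; each statement's English description precedes it below -/
import Mathlib

section
/- Let λ > 0, θ > 0, γ = √(2λ), δ = √(2λ + 2θγ). For every x ∈ ℝ with x > 0 and every bounded measurable f : ℝ → ℝ, the identity (1/(2δ))∫_ℝ e^{-δ|b|} f(b) db + (θ/(2δ)) ∫_ℝ f(b) ∫_{-∞}^{x} e^{-γ|y| - δ|b - y|} dy db = ∫_ℝ (1/γ) e^{-γ|b|} e_x(b) f(b) db holds, where e_x(b) = e^{-δ|b-x| + γ(|b| - x)} ( sgn(b - x)/4 + γ/(4δ) ) + (1/2)·1_{b < x}. -/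
open MeasureTheory ProbabilityTheory Real Set Filter

lemma expc_integrableOn_Iic {c : ℝ} (hc : 0 < c) (a : ℝ) :
    IntegrableOn (fun y : ℝ => Real.exp (c * y)) (Iic a) := by
  have h1 : Integrable ((Iic (c * a)).indicator Real.exp) :=
    (integrable_indicator_iff measurableSet_Iic).2 (integrableOn_exp_Iic (c * a))
  have h2 : Integrable (fun y : ℝ => ((Iic (c * a)).indicator Real.exp) (c * y)) :=
    h1.comp_mul_left' hc.ne'
  refine (integrable_indicator_iff measurableSet_Iic).1 ?_
  refine h2.congr (Filter.Eventually.of_forall fun y => ?_)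
  by_cases hy : y ≤ a
  · simp [indicator, hy, mul_le_mul_iff_of_pos_left hc]
  · have : ¬ c * y ≤ c * a := fun h => hy ((mul_le_mul_iff_of_pos_left hc).1 h)
    simp [indicator, hy, this]

lemma expc_integral_Iic {c : ℝ} (hc : 0 < c) (a : ℝ) :
    ∫ y in Iic a, Real.exp (c * y) = Real.exp (c * a) / c := by
  have h := integral_comp_neg_Iic a (fun u : ℝ => Real.exp (-(c * u)))
  simp only [mul_neg, neg_neg] at h
  have h2 := integral_comp_mul_left_Ioi (fun u : ℝ => Real.exp (-u)) (-a) hc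
  simp only [integral_exp_neg_Ioi, smul_eq_mul, mul_neg, neg_neg] at h2
  rw [h, h2]; ring

lemma expc_integral_Ioc {c : ℝ} (hc : c ≠ 0) {a b : ℝ} (hab : a ≤ b) :
    ∫ y in Ioc a b, Real.exp (c * y) = (Real.exp (c * b) - Real.exp (c * a)) / c := by
  rw [← intervalIntegral.integral_of_le hab,
    _root_.intervalIntegral.integral_comp_mul_left Real.exp hc,
    integral_exp, smul_eq_mul]
  ring

lemma expc_integrableOn_Ioc (c a b : ℝ) :
    IntegrableOn (fun y : ℝ => Real.exp (c * y)) (Ioc a b) :=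
  (Real.continuous_exp.comp (continuous_const.mul continuous_id)).integrableOn_Ioc

lemma int_exp_neg_abs {c : ℝ} (hc : 0 < c) :
    Integrable (fun b : ℝ => Real.exp (-c * |b|)) := by
  rw [← integrableOn_univ, ← Set.Iic_union_Ioi (a := (0:ℝ))]
  refine IntegrableOn.union ?_ ?_
  · refine (expc_integrableOn_Iic hc 0).congr_fun (fun y hy => ?_) measurableSet_Iic
    rw [abs_of_nonpos hy]; ring_nf
  · refine (exp_neg_integrableOn_Ioi 0 hc).congr_fun (fun y hy => ?_) measurableSet_Ioi
    rw [abs_of_pos hy]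

lemma piece_Iic_int {p : ℝ} (hp : 0 < p) (q a : ℝ) :
    IntegrableOn (fun y : ℝ => Real.exp (p * y + q)) (Iic a) := by
  simp_rw [Real.exp_add]
  exact (expc_integrableOn_Iic hp a).mul_const _

lemma piece_Iic {p : ℝ} (hp : 0 < p) (q a : ℝ) :
    ∫ y in Iic a, Real.exp (p * y + q) = Real.exp (p * a + q) / p := by
  simp_rw [Real.exp_add]
  rw [integral_mul_const, expc_integral_Iic hp]
  ring

lemma piece_Ioc_int (p q a b : ℝ) :
    IntegrableOn (fun y : ℝ => Real.exp (p * y + q)) (Ioc a b) :=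
  (Real.continuous_exp.comp ((continuous_const.mul continuous_id).add
    continuous_const)).integrableOn_Ioc

lemma piece_Ioc {p : ℝ} (hp : p ≠ 0) (q : ℝ) {a b : ℝ} (hab : a ≤ b) :
    ∫ y in Ioc a b, Real.exp (p * y + q)
      = (Real.exp (p * b + q) - Real.exp (p * a + q)) / p := by
  simp_rw [Real.exp_add]
  rw [integral_mul_const, expc_integral_Ioc hp hab]
  ring

lemma alg1 (γ δ e1 e2 e3 e4 : ℝ) (hγ : 0 < γ) (hd : γ < δ) (he3 : 0 < e3)
    (hrel : e3 * e4 = e2 * e1) :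
    1/(2*δ) * e1 + ((δ^2 - γ^2)/(2*γ))/(2*δ) * (e1/(γ+δ) + (e2*e1 - e1)/(δ-γ))
      = 1/γ * e3 * (e4 * (1/4 + γ/(4*δ))) := by
  have hδ : (0:ℝ) < δ := hγ.trans hd
  have h1 : γ + δ ≠ 0 := by positivity
  have h2 : δ - γ ≠ 0 := sub_ne_zero.2 hd.ne'
  have h4 : e4 = e2 * e1 / e3 := by field_simp; linear_combination hrel
  subst h4
  field_simp
  ring

lemma alg2 (γ δ e1 e3 E e4 : ℝ) (hγ : 0 < γ) (hd : γ < δ) (he3 : 0 < e3)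
    (hrel : e3 * e4 = E) :
    1/(2*δ) * e1 + ((δ^2 - γ^2)/(2*γ))/(2*δ)
        * (e1/(γ+δ) + (e3 - e1)/(δ-γ) + (E - e3)/(-(γ+δ)))
      = 1/γ * e3 * (e4 * (-1/4 + γ/(4*δ)) + 1/2) := by
  have hδ : (0:ℝ) < δ := hγ.trans hd
  have h1 : γ + δ ≠ 0 := by positivity
  have h2 : δ - γ ≠ 0 := sub_ne_zero.2 hd.ne'
  have h4 : e4 = E / e3 := by field_simp; linear_combination hrel
  subst h4
  rw [div_neg]
  field_simp
  ring

lemma alg3 (γ δ A B E e4 : ℝ) (hγ : 0 < γ) (hd : γ < δ) (hA : 0 < A)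
    (hrel : A * e4 = E) :
    1/(2*δ) * B + ((δ^2 - γ^2)/(2*γ))/(2*δ)
        * (A/(γ+δ) + (B - A)/(γ-δ) + (E - B)/(-(γ+δ)))
      = 1/γ * A * (e4 * (-1/4 + γ/(4*δ)) + 1/2) := by
  have hδ : (0:ℝ) < δ := hγ.trans hd
  have h1 : γ + δ ≠ 0 := by positivity
  have h2 : γ - δ ≠ 0 := sub_ne_zero.2 hd.ne
  have h4 : e4 = E / A := by field_simp; linear_combination hrel
  subst h4
  rw [div_neg]
  field_simp
  ring


lemma key_pointwise {γ δ θ x : ℝ} (hγ : 0 < γ) (hd : γ < δ)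
    (hθ : θ = (δ^2 - γ^2)/(2*γ)) (hx : 0 < x) {b : ℝ} (hb : b ≠ x) :
    (1/(2*δ)) * Real.exp (-δ*|b|)
      + (θ/(2*δ)) * (∫ y in Iic x, Real.exp (-γ * |y| - δ * |b - y|))
    = (1/γ) * Real.exp (-γ*|b|) *
        (Real.exp (-δ * |b - x| + γ * (|b| - x)) * (Real.sign (b - x)/4 + γ/(4*δ))
          + (if b < x then (1:ℝ) else 0)/2) := by
  have hδ : (0:ℝ) < δ := hγ.trans hd
  have hgd : (0:ℝ) < γ + δ := by linarith
  have hdg : δ - γ ≠ 0 := sub_ne_zero.2 hd.ne'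
  have hngd : -(γ+δ) ≠ 0 := neg_ne_zero.2 hgd.ne'
  rcases hb.lt_or_gt with hlt | hgt
  · -- b < x
    rcases le_or_gt 0 b with hb0 | hb0
    · -- 0 ≤ b < x
      have e1eq : EqOn (fun y : ℝ => Real.exp (-γ * |y| - δ * |b - y|))
          (fun y : ℝ => Real.exp ((γ+δ)*y + -δ*b)) (Iic 0) := fun y hy => by
        have hy' : y ≤ 0 := hy
        have h2 : (0:ℝ) ≤ b - y := by linarith
        simp only []
        rw [abs_of_nonpos hy', abs_of_nonneg h2]; congr 1; ring
      have e2eq : EqOn (fun y : ℝ => Real.exp (-γ * |y| - δ * |b - y|))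
          (fun y : ℝ => Real.exp ((δ-γ)*y + -δ*b)) (Ioc 0 b) := fun y hy => by
        obtain ⟨h1, h2⟩ := hy
        have h3 : (0:ℝ) ≤ b - y := by linarith
        simp only []
        rw [abs_of_pos h1, abs_of_nonneg h3]; congr 1; ring
      have e3eq : EqOn (fun y : ℝ => Real.exp (-γ * |y| - δ * |b - y|))
          (fun y : ℝ => Real.exp (-(γ+δ)*y + δ*b)) (Ioc b x) := fun y hy => by
        obtain ⟨h1, h2⟩ := hy
        have h3 : b - y ≤ 0 := by linarith
        have h4 : 0 < y := lt_of_le_of_lt hb0 h1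
        simp only []
        rw [abs_of_pos h4, abs_of_nonpos h3]; congr 1; ring
      have hdisj1 : Disjoint (Iic 0 ∪ Ioc 0 b) (Ioc b x) := by
        rw [Iic_union_Ioc_eq_Iic hb0]; exact Iic_disjoint_Ioc le_rfl
      have hint1 : IntegrableOn (fun y : ℝ => Real.exp (-γ * |y| - δ * |b - y|))
          (Iic 0 ∪ Ioc 0 b) :=
        ((piece_Iic_int hgd (-δ*b) 0).congr_fun e1eq.symm measurableSet_Iic).union
          ((piece_Ioc_int _ _ 0 b).congr_fun e2eq.symm measurableSet_Ioc)
      have hint2 : IntegrableOn (fun y : ℝ => Real.exp (-γ * |y| - δ * |b - y|))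
          (Ioc b x) :=
        (piece_Ioc_int _ _ b x).congr_fun e3eq.symm measurableSet_Ioc
      rw [← Iic_union_Ioc_eq_Iic hlt.le, ← Iic_union_Ioc_eq_Iic hb0,
        setIntegral_union hdisj1 measurableSet_Ioc hint1 hint2,
        setIntegral_union (Iic_disjoint_Ioc le_rfl) measurableSet_Ioc
          ((piece_Iic_int hgd (-δ*b) 0).congr_fun e1eq.symm measurableSet_Iic)
          ((piece_Ioc_int _ _ 0 b).congr_fun e2eq.symm measurableSet_Ioc),
        setIntegral_congr_fun measurableSet_Iic e1eq,
        setIntegral_congr_fun measurableSet_Ioc e2eq,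
        setIntegral_congr_fun measurableSet_Ioc e3eq,
        piece_Iic hgd, piece_Ioc hdg _ hb0, piece_Ioc hngd _ hlt.le]
      rw [abs_of_nonneg hb0, abs_of_neg (sub_neg.2 hlt), Real.sign_of_neg (sub_neg.2 hlt),
        if_pos hlt]
      simp only [mul_zero, zero_add]
      rw [show (δ-γ)*b + -δ*b = -γ*b from by ring,
        show -(γ+δ)*b + δ*b = -γ*b from by ring, hθ]
      exact alg2 γ δ (Real.exp (-δ*b)) (Real.exp (-γ*b)) (Real.exp (-(γ+δ)*x + δ*b))
        (Real.exp (-δ * -(b-x) + γ * (b - x))) hγ hd (Real.exp_pos _)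
        (by rw [← Real.exp_add]; congr 1; ring)
    · -- b < 0
      have e1eq : EqOn (fun y : ℝ => Real.exp (-γ * |y| - δ * |b - y|))
          (fun y : ℝ => Real.exp ((γ+δ)*y + -δ*b)) (Iic b) := fun y hy => by
        have hy' : y ≤ b := hy
        have h2 : (0:ℝ) ≤ b - y := by linarith
        have h3 : y ≤ 0 := hy'.trans hb0.le
        simp only []
        rw [abs_of_nonpos h3, abs_of_nonneg h2]; congr 1; ring
      have e2eq : EqOn (fun y : ℝ => Real.exp (-γ * |y| - δ * |b - y|))
          (fun y : ℝ => Real.exp ((γ-δ)*y + δ*b)) (Ioc b 0) := fun y hy => by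
        obtain ⟨h1, h2⟩ := hy
        have h3 : b - y ≤ 0 := by linarith
        simp only []
        rw [abs_of_nonpos h2, abs_of_nonpos h3]; congr 1; ring
      have e3eq : EqOn (fun y : ℝ => Real.exp (-γ * |y| - δ * |b - y|))
          (fun y : ℝ => Real.exp (-(γ+δ)*y + δ*b)) (Ioc 0 x) := fun y hy => by
        obtain ⟨h1, h2⟩ := hy
        have h3 : b - y ≤ 0 := by linarith
        simp only []
        rw [abs_of_pos h1, abs_of_nonpos h3]; congr 1; ring
      have hdisj1 : Disjoint (Iic b ∪ Ioc b 0) (Ioc 0 x) := by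
        rw [Iic_union_Ioc_eq_Iic hb0.le]; exact Iic_disjoint_Ioc le_rfl
      have hgdne : γ - δ ≠ 0 := sub_ne_zero.2 hd.ne
      have hint1 : IntegrableOn (fun y : ℝ => Real.exp (-γ * |y| - δ * |b - y|))
          (Iic b ∪ Ioc b 0) :=
        ((piece_Iic_int hgd (-δ*b) b).congr_fun e1eq.symm measurableSet_Iic).union
          ((piece_Ioc_int _ _ b 0).congr_fun e2eq.symm measurableSet_Ioc)
      have hint2 : IntegrableOn (fun y : ℝ => Real.exp (-γ * |y| - δ * |b - y|))
          (Ioc 0 x) :=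
        (piece_Ioc_int _ _ 0 x).congr_fun e3eq.symm measurableSet_Ioc
      rw [show Iic x = (Iic b ∪ Ioc b 0) ∪ Ioc 0 x from by
          rw [Iic_union_Ioc_eq_Iic hb0.le, Iic_union_Ioc_eq_Iic hx.le],
        setIntegral_union hdisj1 measurableSet_Ioc hint1 hint2,
        setIntegral_union (Iic_disjoint_Ioc le_rfl) measurableSet_Ioc
          ((piece_Iic_int hgd (-δ*b) b).congr_fun e1eq.symm measurableSet_Iic)
          ((piece_Ioc_int _ _ b 0).congr_fun e2eq.symm measurableSet_Ioc),
        setIntegral_congr_fun measurableSet_Iic e1eq,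
        setIntegral_congr_fun measurableSet_Ioc e2eq,
        setIntegral_congr_fun measurableSet_Ioc e3eq,
        piece_Iic hgd, piece_Ioc hgdne _ hb0.le, piece_Ioc hngd _ hx.le]
      rw [abs_of_neg hb0, abs_of_neg (sub_neg.2 hlt), Real.sign_of_neg (sub_neg.2 hlt),
        if_pos hlt]
      simp only [mul_zero, zero_add]
      rw [show (γ+δ)*b + -δ*b = γ*b from by ring,
        show (γ-δ)*b + δ*b = γ*b from by ring,
        show -δ * -b = δ*b from by ring,
        show -γ * -b = γ*b from by ring, hθ]
      exact alg3 γ δ (Real.exp (γ*b)) (Real.exp (δ*b)) (Real.exp (-(γ+δ)*x + δ*b))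
        (Real.exp (-δ * -(b-x) + γ * (-b - x))) hγ hd (Real.exp_pos _)
        (by rw [← Real.exp_add]; congr 1; ring)
  · -- x < b
    have hb0 : 0 < b := hx.trans hgt
    have e1eq : EqOn (fun y : ℝ => Real.exp (-γ * |y| - δ * |b - y|))
        (fun y : ℝ => Real.exp ((γ+δ)*y + -δ*b)) (Iic 0) := fun y hy => by
      have hy' : y ≤ 0 := hy
      have h2 : (0:ℝ) ≤ b - y := by linarith
      simp only []
      rw [abs_of_nonpos hy', abs_of_nonneg h2]; congr 1; ring
    have e2eq : EqOn (fun y : ℝ => Real.exp (-γ * |y| - δ * |b - y|))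
        (fun y : ℝ => Real.exp ((δ-γ)*y + -δ*b)) (Ioc 0 x) := fun y hy => by
      obtain ⟨h1, h2⟩ := hy
      have h3 : (0:ℝ) ≤ b - y := by linarith
      simp only []
      rw [abs_of_pos h1, abs_of_nonneg h3]; congr 1; ring
    rw [← Iic_union_Ioc_eq_Iic hx.le,
      setIntegral_union (Iic_disjoint_Ioc le_rfl) measurableSet_Ioc
        ((piece_Iic_int hgd (-δ*b) 0).congr_fun e1eq.symm measurableSet_Iic)
        ((piece_Ioc_int _ _ 0 x).congr_fun e2eq.symm measurableSet_Ioc),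
      setIntegral_congr_fun measurableSet_Iic e1eq,
      setIntegral_congr_fun measurableSet_Ioc e2eq,
      piece_Iic hgd, piece_Ioc hdg _ hx.le]
    rw [abs_of_pos hb0, abs_of_pos (sub_pos.2 hgt), Real.sign_of_pos (sub_pos.2 hgt),
      if_neg (not_lt.2 hgt.le)]
    simp only [mul_zero, zero_add, zero_div, add_zero]
    rw [Real.exp_add ((δ-γ)*x) (-δ*b), hθ]
    exact alg1 γ δ (Real.exp (-δ*b)) (Real.exp ((δ-γ)*x)) (Real.exp (-γ*b))
      (Real.exp (-δ * (b-x) + γ * (b - x))) hγ hd (Real.exp_pos _)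
      (by rw [← Real.exp_add, ← Real.exp_add]; congr 1; ring)


/-- The integral identity establishing `P(X_T < x | B_T = b) = e_x(b)` for `x > 0`. -/
theorem conditional_law_integral_identity_pos (lam θ γ δ : ℝ)
    (hlam : 0 < lam) (hθ : 0 < θ)
    (hγ : γ = Real.sqrt (2 * lam)) (hδ : δ = Real.sqrt (2 * lam + 2 * θ * γ))
    (x : ℝ) (hx : 0 < x)
    (f : ℝ → ℝ) (hf : Measurable f) (C : ℝ) (hbd : ∀ b, |f b| ≤ C) :
    (1 / (2 * δ)) * (∫ b : ℝ, Real.exp (-δ * |b|) * f b)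
      + (θ / (2 * δ)) *
        (∫ b : ℝ, f b * ∫ y in Iic x, Real.exp (-γ * |y| - δ * |b - y|))
    = ∫ b : ℝ, (1 / γ) * Real.exp (-γ * |b|) *
        (Real.exp (-δ * |b - x| + γ * (|b| - x)) * (Real.sign (b - x) / 4 + γ / (4 * δ))
          + (if b < x then (1 : ℝ) else 0) / 2) * f b := by
  have hγpos : 0 < γ := by rw [hγ]; exact Real.sqrt_pos.2 (by linarith)
  have hγsq : γ^2 = 2 * lam := by rw [hγ]; exact Real.sq_sqrt (by linarith)
  have hδsq : δ^2 = 2 * lam + 2 * θ * γ := by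
    rw [hδ]; exact Real.sq_sqrt (by positivity)
  have hδpos : 0 < δ := by rw [hδ]; exact Real.sqrt_pos.2 (by positivity)
  have hsq : γ^2 < δ^2 := by rw [hγsq, hδsq]; nlinarith
  have hd : γ < δ := by nlinarith
  have hθeq : θ = (δ^2 - γ^2)/(2*γ) := by
    rw [hδsq, hγsq]; field_simp; ring
  -- measurability of the e_x factor
  have hsign : Measurable fun b : ℝ => Real.sign (b - x) := by
    have h : (fun b : ℝ => Real.sign (b - x))
        = fun b => if b - x < 0 then (-1:ℝ) else if 0 < b - x then 1 else 0 := by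
      funext b; rw [Real.sign]
    rw [h]
    exact Measurable.ite (measurableSet_lt (measurable_id.sub measurable_const)
        measurable_const) measurable_const
      (Measurable.ite (measurableSet_lt measurable_const
        (measurable_id.sub measurable_const)) measurable_const measurable_const)
  have hmE : Measurable fun b : ℝ => Real.exp (-δ * |b - x| + γ * (|b| - x)) *
      (Real.sign (b - x) / 4 + γ / (4 * δ)) + (if b < x then (1 : ℝ) else 0) / 2 := by
    refine Measurable.add (Measurable.mul ?_ ?_) ?_
    · exact Real.measurable_exp.comp
        ((((measurable_id.sub measurable_const).abs.const_mul (-δ))).add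
          ((measurable_id.abs.sub measurable_const).const_mul γ))
    · exact (hsign.div_const 4).add_const _
    · exact (Measurable.ite (measurableSet_lt measurable_id measurable_const)
        measurable_const measurable_const).div_const 2
  -- bound on the e_x factor
  have hEb : ∀ b : ℝ, |Real.exp (-δ * |b - x| + γ * (|b| - x)) *
      (Real.sign (b - x) / 4 + γ / (4 * δ)) + (if b < x then (1 : ℝ) else 0) / 2| ≤ 1 := by
    intro b
    have habs : |b| - x ≤ |b - x| := by
      have h := abs_sub_abs_le_abs_sub b x
      rwa [abs_of_pos hx] at h
    have h1 : Real.exp (-δ * |b - x| + γ * (|b| - x)) ≤ 1 := by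
      rw [Real.exp_le_one_iff]
      have h2 := mul_le_mul_of_nonneg_left habs hγpos.le
      have h3 := mul_nonneg (sub_nonneg.2 hd.le) (abs_nonneg (b - x))
      nlinarith
    have hs : |Real.sign (b - x)| ≤ 1 := by
      rcases lt_trichotomy (b - x) 0 with h|h|h
      · rw [Real.sign_of_neg h]; norm_num
      · rw [h, Real.sign_zero]; norm_num
      · rw [Real.sign_of_pos h]; norm_num
    have h2 : |Real.sign (b - x) / 4 + γ / (4 * δ)| ≤ 1/2 := by
      have hgd4 : γ / (4*δ) ≤ 1/4 := by
        rw [div_le_div_iff₀ (by positivity) (by norm_num)]; linarith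
      have hgd0 : (0:ℝ) ≤ γ / (4*δ) := by positivity
      have h44 : |(4:ℝ)| = 4 := by norm_num
      calc |Real.sign (b - x) / 4 + γ / (4 * δ)|
          ≤ |Real.sign (b - x) / 4| + |γ / (4 * δ)| := abs_add_le _ _
        _ ≤ 1/4 + 1/4 := by
            rw [abs_div, h44, abs_of_nonneg hgd0]
            exact add_le_add (by linarith) hgd4
        _ = 1/2 := by norm_num
    have h3 : |(if b < x then (1:ℝ) else 0) / 2| ≤ 1/2 := by
      rw [abs_le]; constructor <;> split <;> norm_num
    calc |Real.exp (-δ * |b - x| + γ * (|b| - x)) * (Real.sign (b - x) / 4 + γ / (4 * δ))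
            + (if b < x then (1:ℝ) else 0) / 2|
        ≤ |Real.exp (-δ * |b - x| + γ * (|b| - x)) * (Real.sign (b - x) / 4 + γ / (4 * δ))|
            + |(if b < x then (1:ℝ) else 0) / 2| := abs_add_le _ _
      _ ≤ 1 * (1/2) + 1/2 := by
          refine add_le_add ?_ h3
          rw [abs_mul, abs_of_nonneg (Real.exp_pos _).le]
          exact mul_le_mul h1 h2 (abs_nonneg _) zero_le_one
      _ = 1 := by norm_num
  have hC0 : 0 ≤ C := le_trans (abs_nonneg _) (hbd 0)
  -- integrability of the RHS integrand
  have hFnm : Measurable fun b : ℝ => (1 / γ) * Real.exp (-γ * |b|) *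
      (Real.exp (-δ * |b - x| + γ * (|b| - x)) * (Real.sign (b - x) / 4 + γ / (4 * δ))
        + (if b < x then (1 : ℝ) else 0) / 2) * f b :=
    (((measurable_const.mul (Real.measurable_exp.comp
      (measurable_id.abs.const_mul (-γ)))).mul hmE).mul hf)
  have hFnint : Integrable fun b : ℝ => (1 / γ) * Real.exp (-γ * |b|) *
      (Real.exp (-δ * |b - x| + γ * (|b| - x)) * (Real.sign (b - x) / 4 + γ / (4 * δ))
        + (if b < x then (1 : ℝ) else 0) / 2) * f b := by
    refine Integrable.mono' (((int_exp_neg_abs hγpos).const_mul (1/γ)).const_mul C)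
      hFnm.aestronglyMeasurable (Filter.Eventually.of_forall fun b => ?_)
    rw [Real.norm_eq_abs]
    have he := (Real.exp_pos (-γ * |b|)).le
    calc |(1 / γ) * Real.exp (-γ * |b|) *
          (Real.exp (-δ * |b - x| + γ * (|b| - x)) * (Real.sign (b - x) / 4 + γ / (4 * δ))
            + (if b < x then (1 : ℝ) else 0) / 2) * f b|
        = (1/γ) * Real.exp (-γ * |b|) *
            |Real.exp (-δ * |b - x| + γ * (|b| - x)) * (Real.sign (b - x) / 4 + γ / (4 * δ))
              + (if b < x then (1 : ℝ) else 0) / 2| * |f b| := by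
          rw [abs_mul, abs_mul, abs_mul,
            abs_of_nonneg (by positivity : (0:ℝ) ≤ 1/γ), abs_of_nonneg he]
      _ ≤ (1/γ) * Real.exp (-γ * |b|) * 1 * C := by gcongr <;> [exact hEb b; exact hbd b]
      _ = C * ((1/γ) * Real.exp (-γ * |b|)) := by ring
  have h1int : Integrable fun b => Real.exp (-δ * |b|) * f b := by
    have h := (int_exp_neg_abs hδpos).bdd_mul hf.aestronglyMeasurable
      (c := C) (Filter.Eventually.of_forall fun b => by rw [Real.norm_eq_abs]; exact hbd b)
    exact h.congr (Filter.Eventually.of_forall fun b => mul_comm _ _)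
  have hxae : ∀ᵐ (b : ℝ), b ≠ x := by
    rw [ae_iff]
    have h : {b : ℝ | ¬ b ≠ x} = {x} := by ext b; simp
    rw [h]; exact measure_singleton x
  have hstep : (θ / (2 * δ)) *
        (∫ b : ℝ, f b * ∫ y in Iic x, Real.exp (-γ * |y| - δ * |b - y|))
      = ∫ b : ℝ, ((1 / γ) * Real.exp (-γ * |b|) *
          (Real.exp (-δ * |b - x| + γ * (|b| - x)) * (Real.sign (b - x) / 4 + γ / (4 * δ))
            + (if b < x then (1 : ℝ) else 0) / 2) * f b
          - (1 / (2 * δ)) * (Real.exp (-δ * |b|) * f b)) := by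
    rw [← integral_const_mul]
    refine integral_congr_ae ?_
    filter_upwards [hxae] with b hb
    have hk := key_pointwise hγpos hd hθeq hx hb
    linear_combination (f b) * hk
  rw [hstep, integral_sub hFnint (h1int.const_mul (1/(2*δ))), integral_const_mul]
  ring
end

section
/- The Laplace transform (in t, with parameter λ) of the half-normal density f(t,x) = (θ√2/√(πt)) e^{-θ²x²/(2t)} (as a function of t, for fixed x ≥ 0) equals (1/λ)·θ√(2λ) e^{-θ√(2λ)·x}; i.e., ∫_0^∞ λ e^{-λt} (θ√2/√(πt)) e^{-θ²x²/(2t)} dt = θ√(2λ) e^{-θ√(2λ) x} for all λ > 0, x ≥ 0, θ > 0. -/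
open MeasureTheory ProbabilityTheory Real Set Filter


lemma key_pos (b : ℝ) (hb : 0 < b) :
    ∫ v in Ioi (0:ℝ), Real.exp (-(v^2 + b^2/v^2))
      = Real.sqrt π / 2 * Real.exp (-(2*b)) := by
  set g : ℝ → ℝ := fun w => Real.exp (-w^2) with hg
  set f : ℝ → ℝ := fun v => v - b/v with hf
  set f' : ℝ → ℝ := fun v => 1 + b/v^2 with hf'
  have hderiv : ∀ v ∈ Ioi (0:ℝ), HasDerivWithinAt f (f' v) (Ioi 0) v := by
    intro v hv
    have hv0 : v ≠ 0 := (mem_Ioi.mp hv).ne'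
    have : HasDerivAt f (1 - b * (-(v^2)⁻¹)) v := by
      simpa [hf, div_eq_mul_inv, mul_comm, Pi.sub_def] using
        ((hasDerivAt_id v).sub ((hasDerivAt_inv hv0).const_mul b))
    have h2 : (1 : ℝ) - b * (-(v^2)⁻¹) = f' v := by
      simp only [hf']; ring
    exact (h2 ▸ this).hasDerivWithinAt
  have hinj : InjOn f (Ioi 0) := by
    apply StrictMonoOn.injOn
    intro u hu v hv huv
    have hu0 : (0:ℝ) < u := hu
    have hv0 : (0:ℝ) < v := hv
    have : b / v < b / u := div_lt_div_of_pos_left hb hu0 huv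
    simpa [hf] using sub_lt_sub huv this
  have himg : f '' Ioi 0 = univ := by
    apply eq_univ_of_forall
    intro w
    set s := Real.sqrt (w^2 + 4*b) with hs
    have hs2 : s^2 = w^2 + 4*b := Real.sq_sqrt (by nlinarith [sq_nonneg w])
    have hsw : -w < s := by
      nlinarith [Real.sqrt_nonneg (w^2+4*b), sq_nonneg (s + w)]
    have hv0 : (0:ℝ) < (w + s)/2 := by linarith
    refine ⟨(w+s)/2, hv0, ?_⟩
    have hq : b / ((w+s)/2) = (w+s)/2 - w := by
      rw [div_eq_iff hv0.ne']; nlinarith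
    simp only [hf]
    rw [hq]; ring
  set h : ℝ → ℝ := fun v => Real.exp (-(v^2 + b^2/v^2)) with hh
  set h1 : ℝ → ℝ := fun v => b/v^2 * h v with hh1
  have hkey : ∀ v ∈ Ioi (0:ℝ), |f' v| • g (f v) = Real.exp (2*b) * (h v + h1 v) := by
    intro v hv
    have hv0 : (0:ℝ) < v := hv
    have hf'pos : (0:ℝ) < f' v := by
      have : 0 ≤ b / v^2 := div_nonneg hb.le (sq_nonneg v)
      simp only [hf']; linarith
    rw [abs_of_pos hf'pos]
    have e1 : -(f v)^2 = -(v^2 + b^2/v^2) + 2*b := by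
      simp only [hf]; field_simp; ring
    simp only [hg, hf', hh, hh1, smul_eq_mul, abs_of_pos hf'pos, e1, Real.exp_add]
    ring
  have hgi : IntegrableOn g univ := by
    have : Integrable g := by simpa [hg] using integrable_exp_neg_mul_sq (one_pos)
    exact this.integrableOn
  have hInt : IntegrableOn (fun v => |f' v| • g (f v)) (Ioi 0) :=
    (integrableOn_image_iff_integrableOn_abs_deriv_smul measurableSet_Ioi hderiv hinj g).mp
      (himg ▸ hgi)
  have hsum : IntegrableOn (fun v => h v + h1 v) (Ioi 0) := by
    have h2 : IntegrableOn (fun v => Real.exp (2*b) * (h v + h1 v)) (Ioi 0) :=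
      hInt.congr_fun hkey measurableSet_Ioi
    have h3 := h2.const_mul (Real.exp (2*b))⁻¹
    simp [← mul_assoc, inv_mul_cancel₀ (Real.exp_ne_zero (2*b))] at h3
    exact h3
  have hmeas : Measurable h := by
    apply Real.measurable_exp.comp; fun_prop
  have hnn : ∀ v : ℝ, 0 ≤ h v ∧ 0 ≤ h1 v := by
    intro v
    refine ⟨(Real.exp_pos _).le, mul_nonneg (div_nonneg hb.le (sq_nonneg v)) (Real.exp_pos _).le⟩
  have hh_int : IntegrableOn h (Ioi 0) := by
    refine Integrable.mono' hsum hmeas.aestronglyMeasurable.restrict ?_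
    filter_upwards with v
    rw [Real.norm_eq_abs, abs_of_nonneg (hnn v).1]
    exact le_add_of_nonneg_right (hnn v).2
  have hh1_int : IntegrableOn h1 (Ioi 0) := by
    have hmeas1 : Measurable h1 := by
      apply Measurable.mul _ hmeas; fun_prop
    refine Integrable.mono' hsum hmeas1.aestronglyMeasurable.restrict ?_
    filter_upwards with v
    rw [Real.norm_eq_abs, abs_of_nonneg (hnn v).2]
    exact le_add_of_nonneg_left (hnn v).1
  -- second substitution: v ↦ b / v
  have e2 : ∫ v in Ioi (0:ℝ), h1 v = ∫ v in Ioi (0:ℝ), h v := by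
    have hderiv2 : ∀ v ∈ Ioi (0:ℝ),
        HasDerivWithinAt (fun v => b / v) (-(b/v^2)) (Ioi 0) v := by
      intro v hv
      have hv0 : v ≠ 0 := (mem_Ioi.mp hv).ne'
      have : HasDerivAt (fun v : ℝ => b / v) (b * (-(v^2)⁻¹)) v := by
        simpa [div_eq_mul_inv, mul_comm] using ((hasDerivAt_inv hv0).const_mul b)
      have h2 : b * (-(v^2)⁻¹) = -(b/v^2) := by field_simp
      exact (h2 ▸ this).hasDerivWithinAt
    have hinj2 : InjOn (fun v : ℝ => b / v) (Ioi 0) := by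
      apply StrictAntiOn.injOn
      intro u hu v hv huv
      exact div_lt_div_of_pos_left hb hu huv
    have himg2 : (fun v : ℝ => b / v) '' Ioi 0 = Ioi 0 := by
      ext w
      constructor
      · rintro ⟨v, hv, rfl⟩; exact div_pos hb hv
      · intro hw
        refine ⟨b / w, div_pos hb hw, ?_⟩
        field_simp
    have := integral_image_eq_integral_abs_deriv_smul measurableSet_Ioi hderiv2 hinj2 h
    rw [himg2] at this
    rw [this]
    refine setIntegral_congr_fun measurableSet_Ioi ?_
    intro v hv
    have hv0 : (0:ℝ) < v := hv
    have harg : h (b / v) = h v := by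
      simp only [hh]
      congr 1
      field_simp
      ring
    have habs : |(-(b/v^2))| = b / v^2 := by
      rw [abs_neg, abs_of_nonneg (div_nonneg hb.le (sq_nonneg v))]
    simp only [hh1, smul_eq_mul, habs, harg]
  have hLHS : ∫ x : ℝ, g x = Real.sqrt π := by
    simpa [hg] using integral_gaussian 1
  have e1 : Real.sqrt π = Real.exp (2*b) * ((∫ v in Ioi (0:ℝ), h v) + ∫ v in Ioi (0:ℝ), h1 v) := by
    calc Real.sqrt π = ∫ x : ℝ, g x := hLHS.symm
      _ = ∫ x in f '' Ioi 0, g x := by rw [himg, setIntegral_univ]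
      _ = ∫ v in Ioi (0:ℝ), |f' v| • g (f v) :=
          integral_image_eq_integral_abs_deriv_smul measurableSet_Ioi hderiv hinj g
      _ = ∫ v in Ioi (0:ℝ), Real.exp (2*b) * (h v + h1 v) :=
          setIntegral_congr_fun measurableSet_Ioi hkey
      _ = Real.exp (2*b) * ∫ v in Ioi (0:ℝ), (h v + h1 v) := integral_const_mul _ _
      _ = Real.exp (2*b) * ((∫ v in Ioi (0:ℝ), h v) + ∫ v in Ioi (0:ℝ), h1 v) := by
          rw [integral_add hh_int hh1_int]
  have e3 : Real.sqrt π = 2 * Real.exp (2*b) * ∫ v in Ioi (0:ℝ), h v := by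
    rw [e1, e2]; ring
  show ∫ v in Ioi (0:ℝ), h v = Real.sqrt π / 2 * Real.exp (-(2*b))
  rw [Real.exp_neg, e3]
  field_simp

lemma key_nonneg (b : ℝ) (hb : 0 ≤ b) :
    ∫ v in Ioi (0:ℝ), Real.exp (-(v^2 + b^2/v^2))
      = Real.sqrt π / 2 * Real.exp (-(2*b)) := by
  rcases hb.eq_or_lt with h | h
  · rw [← h]
    simp only [ne_eq, OfNat.ofNat_ne_zero, not_false_eq_true, zero_pow, zero_div, add_zero,
      mul_zero, neg_zero, Real.exp_zero, mul_one]
    have := integral_gaussian_Ioi 1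
    simpa using this
  · exact key_pos b h

/-- Laplace transform of the half-normal density: the occupation time of `0` at an
independent exponential time is exponentially distributed with rate `θ√(2λ)`. -/
theorem halfNormal_laplace_transform (θ lam x : ℝ) (hθ : 0 < θ) (hlam : 0 < lam)
    (hx : 0 ≤ x) :
    ∫ t in Ioi (0 : ℝ),
        lam * Real.exp (-lam * t) * (θ * Real.sqrt 2 / Real.sqrt (π * t)) *
          Real.exp (-θ ^ 2 * x ^ 2 / (2 * t))
      = θ * Real.sqrt (2 * lam) * Real.exp (-θ * Real.sqrt (2 * lam) * x) := by
  set c := Real.sqrt lam with hcdef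
  have hc : 0 < c := Real.sqrt_pos.mpr hlam
  have hc2 : c ^ 2 = lam := Real.sq_sqrt hlam.le
  have hs2 : (Real.sqrt 2) ^ 2 = 2 := Real.sq_sqrt (by norm_num)
  have hs2pos : (0:ℝ) < Real.sqrt 2 := Real.sqrt_pos.mpr (by norm_num)
  have hπ : (0:ℝ) < Real.sqrt π := Real.sqrt_pos.mpr pi_pos
  set G : ℝ → ℝ := fun t =>
    lam * Real.exp (-lam * t) * (θ * Real.sqrt 2 / Real.sqrt (π * t)) *
      Real.exp (-θ ^ 2 * x ^ 2 / (2 * t)) with hG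
  set K : ℝ → ℝ := fun u => Real.exp (-lam * u^2) * Real.exp (-θ ^ 2 * x ^ 2 / (2 * u^2))
    with hK
  set C : ℝ := 2 * lam * θ * Real.sqrt 2 / Real.sqrt π with hCdef
  set b₀ : ℝ := θ * x * c / Real.sqrt 2 with hb₀
  have hb₀nn : 0 ≤ b₀ := by positivity
  have step1 : (∫ u in Ioi (0:ℝ), (2 * u ^ ((2:ℝ)-1)) • G (u ^ (2:ℝ)))
      = ∫ t in Ioi (0:ℝ), G t := integral_comp_rpow_Ioi_of_pos two_pos
  have step2 : (∫ u in Ioi (0:ℝ), (2 * u ^ ((2:ℝ)-1)) • G (u ^ (2:ℝ)))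
      = ∫ u in Ioi (0:ℝ), C * K u := by
    refine setIntegral_congr_fun measurableSet_Ioi ?_
    intro u hu
    have hu0 : (0:ℝ) < u := hu
    have hr : u ^ ((2:ℝ)-1) = u := by norm_num
    have hr2 : u ^ (2:ℝ) = u ^ 2 := by
      rw [show (2:ℝ) = ((2:ℕ):ℝ) by norm_num, Real.rpow_natCast]
    have hsq : Real.sqrt (π * u^2) = Real.sqrt π * u := by
      rw [Real.sqrt_mul pi_pos.le, Real.sqrt_sq hu0.le]
    simp only [hG, hK, hCdef, smul_eq_mul, hr, hr2, hsq]
    field_simp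
  have step3 : ∫ u in Ioi (0:ℝ), K u = c⁻¹ * ∫ v in Ioi (0:ℝ), K (c⁻¹ * v) := by
    have h3 := integral_comp_mul_left_Ioi K 0 (inv_pos.mpr hc)
    simp only [mul_zero, inv_inv, smul_eq_mul] at h3
    rw [h3]
    field_simp
  have step4 : ∫ v in Ioi (0:ℝ), K (c⁻¹ * v)
      = ∫ v in Ioi (0:ℝ), Real.exp (-(v^2 + b₀^2/v^2)) := by
    refine setIntegral_congr_fun measurableSet_Ioi ?_
    intro v hv
    have hv0 : (0:ℝ) < v := hv
    simp only [hK, ← Real.exp_add]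
    congr 1
    rw [hb₀]
    field_simp
    ring_nf
    linear_combination (2*v^4*Real.sqrt 2^2) * hc2 - (c^4*θ^2*x^2) * hs2
  have step5 := key_nonneg b₀ hb₀nn
  have e1 : ∫ t in Ioi (0:ℝ), G t = C * (c⁻¹ * (Real.sqrt π / 2 * Real.exp (-(2*b₀)))) := by
    rw [← step1, step2, integral_const_mul, step3, step4, step5]
  rw [show (∫ t in Ioi (0:ℝ),
        lam * Real.exp (-lam * t) * (θ * Real.sqrt 2 / Real.sqrt (π * t)) *
          Real.exp (-θ ^ 2 * x ^ 2 / (2 * t))) = ∫ t in Ioi (0:ℝ), G t from rfl, e1]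
  have hexp : -(2*b₀) = -θ * Real.sqrt (2*lam) * x := by
    rw [hb₀, Real.sqrt_mul (by norm_num : (0:ℝ) ≤ 2), ← hcdef]
    field_simp
    linear_combination x * hs2
  rw [hexp]
  have hsqrt2lam : Real.sqrt (2*lam) = Real.sqrt 2 * c :=
    Real.sqrt_mul (by norm_num) lam
  rw [hCdef, hsqrt2lam]
  generalize Real.exp (-θ * (Real.sqrt 2 * c) * x) = E
  field_simp
  linear_combination (-E) * hc2
end

section
/- Let S and Y be independent, with S having the law of |B_t| for a standard Brownian motion B (i.e., half-normal with scale √t) and Y standard normal. For θ > 0 and 0 < t < 1, as θ → ∞ the probability P( t − 1 + (2/θ)S + S²/Y² < 0 ) converges to P( S²/Y² < 1 − t ) = (2/π) arccos(√t), the Arcsine law tail. -/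
open MeasureTheory ProbabilityTheory Real Set Filter Topology

lemma radial_integral : ∫ r in Ioi (0:ℝ), r * Real.exp (-r^2 / 2) = 1 := by
  have A : ∀ x : ℝ, HasDerivAt (fun y : ℝ => -Real.exp (-y^2/2)) (x * Real.exp (-x^2/2)) x := by
    intro x
    have h := (((hasDerivAt_pow 2 x).neg.div_const 2).exp).neg
    convert h using 1
    · rfl
    · rfl
    · rfl
    simp
    ring
  have B : Tendsto (fun y : ℝ => -Real.exp (-y^2/2)) atTop (𝓝 0) := by
    rw [show (0:ℝ) = -0 by simp]
    refine Tendsto.neg ?_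
    refine Real.tendsto_exp_atBot.comp ?_
    apply Tendsto.atBot_div_const (by norm_num)
    exact tendsto_neg_atBot_iff.mpr (tendsto_pow_atTop (by norm_num))
  have C : IntegrableOn (fun x : ℝ => x * Real.exp (-x^2/2)) (Ioi 0) := by
    have := integrable_mul_exp_neg_mul_sq (b := (1:ℝ)/2) (by norm_num)
    refine (this.congr ?_).integrableOn
    filter_upwards with x
    ring_nf
  have := integral_Ioi_of_hasDerivAt_of_tendsto' (a := 0) (fun x _ => A x) C B
  simp at this
  simpa using this

lemma pdf_mul (x y : ℝ) : gaussianPDFReal 0 1 x * gaussianPDFReal 0 1 y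
    = (2*π)⁻¹ * Real.exp (-(x^2+y^2)/2) := by
  simp only [gaussianPDFReal, NNReal.coe_one, mul_one, sub_zero]
  rw [show ((√(2 * π))⁻¹ * rexp (-x ^ 2 / 2)) * ((√(2 * π))⁻¹ * rexp (-y ^ 2 / 2))
      = ((√(2*π))⁻¹ * (√(2*π))⁻¹) * (rexp (-x ^ 2 / 2) * rexp (-y ^ 2 / 2)) by ring,
    ← mul_inv, Real.mul_self_sqrt (by positivity), ← Real.exp_add]
  ring_nf

lemma angle_mem_iff {t : ℝ} (ht : 0 < t) (ht1 : t < 1) {θ : ℝ} (h1 : -π < θ) (h2 : θ < π) :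
    (t * Real.cos θ ^ 2 / Real.sin θ ^ 2 < 1 - t)
      ↔ θ = 0 ∨ (Real.arccos (Real.sqrt (1 - t)) < |θ|
          ∧ |θ| < π - Real.arccos (Real.sqrt (1 - t))) := by
  set s := Real.sqrt (1 - t) with hs
  have hs2 : s ^ 2 = 1 - t := Real.sq_sqrt (by linarith)
  have hs0 : 0 < s := Real.sqrt_pos.mpr (by linarith)
  have hs1 : s < 1 := by nlinarith
  set a := Real.arccos s with ha
  have ha0 : 0 < a := Real.arccos_pos.mpr hs1
  have hapi2 : a < π / 2 := Real.arccos_lt_pi_div_two.mpr hs0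
  have hcosa : Real.cos a = s := Real.cos_arccos (by linarith) hs1.le
  have hpi : (0:ℝ) < π := Real.pi_pos
  by_cases hθ : θ = 0
  · subst hθ
    simp only [Real.cos_zero, Real.sin_zero]
    norm_num
    linarith
  · have hsin : Real.sin θ ≠ 0 := fun h => hθ ((Real.sin_eq_zero_iff_of_lt_of_lt h1 h2).mp h)
    have hsin2 : 0 < Real.sin θ ^ 2 := by positivity
    have habs : |θ| ∈ Icc 0 π := ⟨abs_nonneg θ, by cases abs_cases θ with
      | inl h => rw [h.1]; linarith
      | inr h => rw [h.1]; linarith⟩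
    have hamem : a ∈ Icc 0 π := ⟨ha0.le, by linarith⟩
    have hpamem : π - a ∈ Icc 0 π := ⟨by linarith, by linarith⟩
    have hcabs : Real.cos |θ| = Real.cos θ := Real.cos_abs θ
    have step1 : t * Real.cos θ ^ 2 / Real.sin θ ^ 2 < 1 - t ↔ Real.cos θ ^ 2 < 1 - t := by
      rw [div_lt_iff₀ hsin2]
      have hsq : Real.sin θ ^ 2 = 1 - Real.cos θ ^ 2 := Real.sin_sq θ
      constructor <;> intro h <;> nlinarith
    have step2 : Real.cos θ ^ 2 < 1 - t ↔ (-s < Real.cos θ ∧ Real.cos θ < s) := by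
      constructor
      · intro h; constructor <;> nlinarith
      · intro ⟨h1', h2'⟩; nlinarith
    have step3 : Real.cos θ < s ↔ a < |θ| := by
      rw [← hcosa, ← hcabs]
      exact Real.strictAntiOn_cos.lt_iff_gt habs hamem
    have step4 : -s < Real.cos θ ↔ |θ| < π - a := by
      have : Real.cos (π - a) = -s := by rw [Real.cos_pi_sub, hcosa]
      rw [← this, ← hcabs]
      exact Real.strictAntiOn_cos.lt_iff_gt hpamem habs
    rw [step1, step2]
    constructor
    · rintro ⟨u, v⟩; exact Or.inr ⟨step3.mp v, step4.mp u⟩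
    · rintro (h | ⟨u, v⟩)
      · exact absurd h hθ
      · exact ⟨step4.mpr v, step3.mpr u⟩

lemma angle_volume {t : ℝ} (ht : 0 < t) (ht1 : t < 1) :
    volume ({θ : ℝ | t * Real.cos θ ^ 2 / Real.sin θ ^ 2 < 1 - t} ∩ Ioo (-π) π)
      = ENNReal.ofReal (2 * π - 4 * Real.arccos (Real.sqrt (1 - t))) := by
  set a := Real.arccos (Real.sqrt (1 - t)) with ha
  have hs0 : 0 < Real.sqrt (1 - t) := Real.sqrt_pos.mpr (by linarith)
  have hs1 : Real.sqrt (1 - t) < 1 := by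
    nlinarith [Real.sq_sqrt (by linarith : (0:ℝ) ≤ 1 - t), Real.sqrt_nonneg (1 - t)]
  have ha0 : 0 < a := Real.arccos_pos.mpr hs1
  have hapi2 : a < π / 2 := Real.arccos_lt_pi_div_two.mpr hs0
  have hpi : (0:ℝ) < π := Real.pi_pos
  have hset : {θ : ℝ | t * Real.cos θ ^ 2 / Real.sin θ ^ 2 < 1 - t} ∩ Ioo (-π) π
      = (Ioo a (π - a) ∪ Ioo (a - π) (-a)) ∪ ({0} : Set ℝ) := by
    ext θ
    simp only [mem_inter_iff, mem_setOf_eq, mem_Ioo, mem_union, mem_singleton_iff]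
    constructor
    · rintro ⟨hC, hθ1, hθ2⟩
      rcases (angle_mem_iff ht ht1 hθ1 hθ2).mp hC with h0 | ⟨hl, hr⟩
      · exact Or.inr h0
      · rcases abs_cases θ with ⟨he, _⟩ | ⟨he, _⟩
        · rw [he] at hl hr; exact Or.inl (Or.inl ⟨hl, by linarith⟩)
        · rw [he] at hl hr; exact Or.inl (Or.inr ⟨by linarith, by linarith⟩)
    · rintro ((⟨h1', h2'⟩ | ⟨h1', h2'⟩) | h0)
      · have hθ1 : -π < θ := by linarith
        have hθ2 : θ < π := by linarith
        have habs : |θ| = θ := abs_of_pos (by linarith)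
        exact ⟨(angle_mem_iff ht ht1 hθ1 hθ2).mpr (Or.inr ⟨by rw [habs]; linarith,
          by rw [habs]; linarith⟩), hθ1, hθ2⟩
      · have hθ1 : -π < θ := by linarith
        have hθ2 : θ < π := by linarith
        have habs : |θ| = -θ := abs_of_neg (by linarith)
        exact ⟨(angle_mem_iff ht ht1 hθ1 hθ2).mpr (Or.inr ⟨by rw [habs]; linarith,
          by rw [habs]; linarith⟩), hθ1, hθ2⟩
      · subst h0
        refine ⟨?_, by linarith, by linarith⟩
        simp only [Real.cos_zero, Real.sin_zero]
        norm_num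
        linarith
  rw [hset]
  have hd0 : Disjoint (Ioo a (π - a) ∪ Ioo (a - π) (-a)) ({0} : Set ℝ) := by
    rw [Set.disjoint_singleton_right]
    rintro (⟨hx1, _⟩ | ⟨_, hx2⟩) <;> linarith
  rw [measure_union hd0 (measurableSet_singleton 0), measure_singleton, add_zero]
  have hdisj : Disjoint (Ioo a (π - a)) (Ioo (a - π) (-a)) := by
    apply Set.disjoint_left.mpr
    rintro x ⟨hx1, _⟩ ⟨_, hx2⟩
    linarith
  rw [measure_union hdisj measurableSet_Ioo, Real.volume_Ioo, Real.volume_Ioo,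
    ← ENNReal.ofReal_add (by linarith) (by linarith)]
  congr 1
  ring

lemma gauss_prod_eq : (gaussianReal 0 1).prod (gaussianReal 0 1)
    = (volume.prod volume).withDensity
        (fun p : ℝ × ℝ => gaussianPDF 0 1 p.1 * gaussianPDF 0 1 p.2) := by
  apply Measure.prod_eq
  intro s t hs ht
  rw [withDensity_apply _ (hs.prod ht), ← Measure.prod_restrict,
    lintegral_prod_mul (measurable_gaussianPDF 0 1).aemeasurable
      (measurable_gaussianPDF 0 1).aemeasurable,
    gaussianReal_apply 0 one_ne_zero s, gaussianReal_apply 0 one_ne_zero t]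

lemma arccos_comp {t : ℝ} (ht : 0 ≤ t) (ht1 : t ≤ 1) :
    Real.arccos (Real.sqrt (1 - t)) = π / 2 - Real.arccos (Real.sqrt t) := by
  have h1 : Real.cos (Real.arcsin (Real.sqrt t)) = Real.sqrt (1 - t) := by
    rw [Real.cos_arcsin, Real.sq_sqrt ht]
  have h2 : Real.arccos (Real.sqrt (1 - t)) = Real.arcsin (Real.sqrt t) := by
    rw [← h1, Real.arccos_cos (Real.arcsin_nonneg.mpr (Real.sqrt_nonneg t))
      (le_trans (Real.arcsin_le_pi_div_two _) (by linarith [Real.pi_pos]))]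
  rw [h2, Real.arccos, ]
  ring

lemma main_prod {t : ℝ} (ht : 0 < t) (ht1 : t < 1) :
    ((gaussianReal 0 1).prod (gaussianReal 0 1)) {p : ℝ × ℝ | t * p.1 ^ 2 / p.2 ^ 2 < 1 - t}
      = ENNReal.ofReal ((2 / π) * Real.arccos (Real.sqrt t)) := by
  have hpi : (0:ℝ) < π := Real.pi_pos
  set B : Set (ℝ × ℝ) := {p : ℝ × ℝ | t * p.1 ^ 2 / p.2 ^ 2 < 1 - t} with hBdef
  have hB : MeasurableSet B :=
    measurableSet_lt ((measurable_const.mul (measurable_fst.pow_const 2)).div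
      (measurable_snd.pow_const 2)) measurable_const
  set h : ℝ × ℝ → ℝ := fun p => gaussianPDFReal 0 1 p.1 * gaussianPDFReal 0 1 p.2 with hhdef
  have hInt : Integrable h (volume.prod volume) :=
    (integrable_gaussianPDFReal 0 1).mul_prod (integrable_gaussianPDFReal 0 1)
  rw [gauss_prod_eq, withDensity_apply _ hB]
  have e1 : ∫⁻ p in B, gaussianPDF 0 1 p.1 * gaussianPDF 0 1 p.2 ∂(volume.prod volume)
      = ∫⁻ p in B, ENNReal.ofReal (h p) ∂(volume.prod volume) := by
    apply lintegral_congr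
    intro p
    rw [hhdef, gaussianPDF, gaussianPDF,
      ENNReal.ofReal_mul (gaussianPDFReal_nonneg 0 1 p.1)]
  rw [e1, ← ofReal_integral_eq_lintegral_ofReal hInt.integrableOn
    (ae_of_all _ (fun p => mul_nonneg (gaussianPDFReal_nonneg 0 1 p.1)
      (gaussianPDFReal_nonneg 0 1 p.2)))]
  congr 1
  -- real computation
  set T : Set ℝ := {θ : ℝ | t * Real.cos θ ^ 2 / Real.sin θ ^ 2 < 1 - t} with hTdef
  have hT : MeasurableSet T :=
    measurableSet_lt ((measurable_const.mul (Real.measurable_cos.pow_const 2)).div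
      (Real.measurable_sin.pow_const 2)) measurable_const
  have key : ∫ p in B, h p ∂(volume.prod volume)
      = (∫ r in Ioi (0:ℝ), (2*π)⁻¹ * (r * Real.exp (-r^2/2)))
          * (∫ θ in Ioo (-π) π, T.indicator (fun _ => (1:ℝ)) θ) := by
    rw [← Measure.volume_eq_prod, ← integral_indicator hB,
      ← integral_comp_polarCoord_symm (B.indicator h)]
    have htarget : polarCoord.target = Ioi (0:ℝ) ×ˢ Ioo (-π) π := rfl
    rw [htarget, Measure.volume_eq_prod, ← setIntegral_prod_mul]
    apply setIntegral_congr_fun (measurableSet_Ioi.prod measurableSet_Ioo)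
    rintro ⟨r, θ⟩ ⟨hr, hθ1, hθ2⟩
    simp only [polarCoord_symm_apply]
    have hr0 : (0:ℝ) < r := hr
    have hcond : (r * Real.cos θ, r * Real.sin θ) ∈ B ↔ θ ∈ T := by
      simp only [hBdef, hTdef, mem_setOf_eq]
      rcases eq_or_ne (Real.sin θ) 0 with hs | hs
      · rw [hs]
        norm_num
      · have : t * (r * Real.cos θ) ^ 2 / (r * Real.sin θ) ^ 2
            = t * Real.cos θ ^ 2 / Real.sin θ ^ 2 := by
          field_simp
        rw [this]
    by_cases hmem : θ ∈ T
    · rw [Set.indicator_of_mem (hcond.mpr hmem), Set.indicator_of_mem hmem]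
      simp only [hhdef, smul_eq_mul]
      rw [pdf_mul]
      have hsum : (r * Real.cos θ) ^ 2 + (r * Real.sin θ) ^ 2 = r ^ 2 := by
        have := Real.sin_sq_add_cos_sq θ
        nlinarith [this]
      rw [hsum]
      ring
    · rw [Set.indicator_of_notMem (fun hc => hmem (hcond.mp hc)),
        Set.indicator_of_notMem hmem]
      simp
  rw [key]
  have hrad : ∫ r in Ioi (0:ℝ), (2*π)⁻¹ * (r * Real.exp (-r^2/2)) = (2*π)⁻¹ := by
    rw [integral_const_mul, radial_integral, mul_one]
  have hang : ∫ θ in Ioo (-π) π, T.indicator (fun _ => (1:ℝ)) θ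
      = 2 * π - 4 * Real.arccos (Real.sqrt (1 - t)) := by
    rw [setIntegral_indicator hT]
    have hIT : Ioo (-π) π ∩ T = T ∩ Ioo (-π) π := inter_comm _ _
    rw [hIT]
    have hs0 : (0:ℝ) < 1 - t := by linarith
    have hlt : Real.arccos (Real.sqrt (1 - t)) < π / 2 :=
      Real.arccos_lt_pi_div_two.mpr (Real.sqrt_pos.mpr hs0)
    rw [setIntegral_const, smul_eq_mul, mul_one, measureReal_def, angle_volume ht ht1,
      ENNReal.toReal_ofReal (by linarith)]
  rw [hrad, hang, arccos_comp ht.le ht1.le]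
  field_simp
  ring

/-- As `θ → ∞`, the sticky occupation-time probability converges to the Arcsine
law tail `P(S²/Y² < 1 - t) = (2/π) arccos(√t)`, where `S = √t·|X|` with `X, Y`
independent standard Gaussians. -/
theorem sticky_occupation_tendsto_arcsine {Ω : Type*} [MeasureSpace Ω]
    [IsProbabilityMeasure (ℙ : Measure Ω)]
    (t : ℝ) (ht : 0 < t) (ht1 : t < 1)
    (X Y : Ω → ℝ) (hX : Measurable X) (hY : Measurable Y)
    (hXlaw : Measure.map X ℙ = gaussianReal 0 1)
    (hYlaw : Measure.map Y ℙ = gaussianReal 0 1)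
    (hind : IndepFun X Y ℙ)
    (S : Ω → ℝ) (hS : S = fun ω => Real.sqrt t * |X ω|) :
    Tendsto (fun θ : ℝ => ℙ {ω | t - 1 + (2 / θ) * S ω + (S ω) ^ 2 / (Y ω) ^ 2 < 0})
        atTop (nhds (ℙ {ω | (S ω) ^ 2 / (Y ω) ^ 2 < 1 - t})) ∧
      ℙ {ω | (S ω) ^ 2 / (Y ω) ^ 2 < 1 - t}
        = ENNReal.ofReal ((2 / π) * Real.arccos (Real.sqrt t)) := by
  have hS' : ∀ ω, S ω = Real.sqrt t * |X ω| := fun ω => by rw [hS]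
  have hSnn : ∀ ω, 0 ≤ S ω := fun ω => by rw [hS']; positivity
  have hSsq : ∀ ω, S ω ^ 2 = t * X ω ^ 2 := fun ω => by
    rw [hS', mul_pow, Real.sq_sqrt ht.le, sq_abs]
  set s : ℝ → Set Ω := fun θ =>
    {ω | t - 1 + (2 / max θ 1) * S ω + (S ω) ^ 2 / (Y ω) ^ 2 < 0} with hsdef
  have hmono : Monotone s := by
    intro θ₁ θ₂ hθ ω hω
    simp only [hsdef, mem_setOf_eq] at hω ⊢
    have h1 : (0:ℝ) < max θ₁ 1 := lt_of_lt_of_le one_pos (le_max_right _ _)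
    have h2 : max θ₁ 1 ≤ max θ₂ 1 := max_le_max hθ le_rfl
    have hle : 2 / max θ₂ 1 * S ω ≤ 2 / max θ₁ 1 * S ω := by
      gcongr
      exact hSnn ω
    linarith
  have hunion : (⋃ θ : ℝ, s θ) = {ω | (S ω) ^ 2 / (Y ω) ^ 2 < 1 - t} := by
    ext ω
    simp only [hsdef, mem_iUnion, mem_setOf_eq]
    constructor
    · rintro ⟨θ, hθ⟩
      have h1 : (0:ℝ) < max θ 1 := lt_of_lt_of_le one_pos (le_max_right _ _)
      have h0 : 0 ≤ 2 / max θ 1 * S ω := mul_nonneg (by positivity) (hSnn ω)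
      linarith
    · intro hω
      have hεpos : 0 < 1 - t - (S ω) ^ 2 / (Y ω) ^ 2 := by linarith
      set ε := 1 - t - (S ω) ^ 2 / (Y ω) ^ 2 with hε
      refine ⟨2 * S ω / ε + 1, ?_⟩
      have hθ1 : (1:ℝ) ≤ 2 * S ω / ε + 1 := by
        have : 0 ≤ 2 * S ω / ε := div_nonneg (by linarith [hSnn ω]) hεpos.le
        linarith
      rw [max_eq_left hθ1]
      have hθpos : (0:ℝ) < 2 * S ω / ε + 1 := by linarith
      have hkey : 2 / (2 * S ω / ε + 1) * S ω < ε := by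
        rw [div_mul_eq_mul_div, div_lt_iff₀ hθpos]
        have : ε * (2 * S ω / ε + 1) = 2 * S ω + ε := by field_simp
        rw [this]
        linarith
      have := hSnn ω
      linarith
  have htend : Tendsto (ℙ ∘ s) atTop (𝓝 (ℙ (⋃ θ : ℝ, s θ))) :=
    tendsto_measure_iUnion_atTop hmono
  rw [hunion] at htend
  constructor
  · refine htend.congr' ?_
    filter_upwards [eventually_ge_atTop (1:ℝ)] with θ hθ
    simp only [Function.comp_apply, hsdef, max_eq_left hθ]
  · have hBmeas : MeasurableSet {p : ℝ × ℝ | t * p.1 ^ 2 / p.2 ^ 2 < 1 - t} :=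
      measurableSet_lt ((measurable_const.mul (measurable_fst.pow_const 2)).div
        (measurable_snd.pow_const 2)) measurable_const
    have hset : {ω | (S ω) ^ 2 / (Y ω) ^ 2 < 1 - t}
        = (fun ω => (X ω, Y ω)) ⁻¹' {p : ℝ × ℝ | t * p.1 ^ 2 / p.2 ^ 2 < 1 - t} := by
      ext ω
      simp only [mem_setOf_eq, mem_preimage]
      rw [hSsq ω]
    rw [hset, ← Measure.map_apply (hX.prodMk hY) hBmeas,
      (indepFun_iff_map_prod_eq_prod_map_map hX.aemeasurable hY.aemeasurable).mp hind,
      hXlaw, hYlaw, main_prod ht ht1]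
end
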